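/- A block matrix [[P, Q],[Qᵀ, R]] with P ∈ Sᵖ and R ∈ Sʳ is positive semidefinite if and only if P ⪰ 0, R ⪰ 0, and there exists a p×r matrix Y with YᵀY ⪯ I_r such that Q = P^{1/2} Y R^{1/2}. -/

import Mathlib

open Matrix

open scoped ComplexOrder in
/-- The positive semidefinite square root, as defined in the older Mathlib
(removed since): `U * diagonal (√ ∘ eigenvalues) * U⋆`. -/
noncomputable def Matrix.PosSemidef.sqrt {n 𝕜 : Type*} [Fintype n] [RCLike 𝕜] [DecidableEq n]
    {A : Matrix n n 𝕜} (hA : A.PosSemidef) : Matrix n n 𝕜 :=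
  hA.1.eigenvectorUnitary.1 * diagonal ((↑) ∘ (fun i => Real.sqrt (hA.1.eigenvalues i))) *
    (star hA.1.eigenvectorUnitary : Matrix n n 𝕜)

lemma Matrix.PosSemidef.posSemidef_sqrt {n : Type*} [Fintype n] [DecidableEq n]
    {A : Matrix n n ℝ} (hA : A.PosSemidef) : hA.sqrt.PosSemidef := by
  unfold Matrix.PosSemidef.sqrt
  apply PosSemidef.mul_mul_conjTranspose_same
  refine posSemidef_diagonal_iff.mpr fun i => ?_
  simp only [Function.comp_apply, RCLike.ofReal_real_eq_id, id]
  exact Real.sqrt_nonneg _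

lemma Matrix.PosSemidef.sqrt_mul_self {n : Type*} [Fintype n] [DecidableEq n]
    {A : Matrix n n ℝ} (hA : A.PosSemidef) : hA.sqrt * hA.sqrt = A := by
  let C : Matrix n n ℝ := hA.1.eigenvectorUnitary
  let E := diagonal ((↑) ∘ (fun i => Real.sqrt (hA.1.eigenvalues i)) : n → ℝ)
  suffices C * (E * (star C * C) * E) * star C = A by
    change C * E * star C * (C * E * star C) = A
    simpa only [← Matrix.mul_assoc] using this
  have : E * E = diagonal ((↑) ∘ hA.1.eigenvalues) := by
    rw [diagonal_mul_diagonal]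
    congr! with v
    simp [Real.mul_self_sqrt (hA.eigenvalues_nonneg v)]
  simpa [C, this, Function.comp_def] using hA.1.spectral_theorem.symm


lemma matrix_eq_zero_of_dot {m n : Type*} [Fintype m] [Fintype n] [DecidableEq m] [DecidableEq n]
    {A : Matrix m n ℝ} (h : ∀ x y, x ⬝ᵥ A *ᵥ y = 0) : A = 0 := by
  ext i j
  have := h (Pi.single i 1) (Pi.single j 1)
  rw [mulVec_single, single_dotProduct, one_mul] at this
  simpa using this

lemma dot_mul_mulVec {m n k : Type*} [Fintype m] [Fintype n] [Fintype k]
    (A : Matrix m n ℝ) (B : Matrix n k ℝ) (x : m → ℝ) (y : k → ℝ) :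
    x ⬝ᵥ (A * B) *ᵥ y = (Aᵀ *ᵥ x) ⬝ᵥ (B *ᵥ y) := by
  rw [← mulVec_mulVec, dotProduct_mulVec, mulVec_transpose]

lemma dotProduct_self_nonneg' {n : Type*} [Fintype n] (v : n → ℝ) : 0 ≤ v ⬝ᵥ v :=
  Finset.sum_nonneg fun i _ => mul_self_nonneg _

lemma exists_pinv {n : Type*} [Fintype n] [DecidableEq n] {S : Matrix n n ℝ}
    (hS : S.IsHermitian) :
    ∃ Sp Pr : Matrix n n ℝ, Spᵀ = Sp ∧ Prᵀ = Pr ∧ Pr * Pr = Pr ∧ S * Pr = S ∧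
      S * Sp = Pr ∧ Sp * S = Pr ∧ Pr * Sp = Sp := by
  set U : Matrix n n ℝ := (hS.eigenvectorUnitary : Matrix n n ℝ) with hUdef
  set d : n → ℝ := hS.eigenvalues with hddef
  have hmem := hS.eigenvectorUnitary.2
  rw [Unitary.mem_iff] at hmem
  have hstar : star U = Uᵀ := by
    rw [Matrix.star_eq_conjTranspose, conjTranspose_eq_transpose_of_trivial]
  obtain ⟨hU1, hU2⟩ := hmem
  rw [← hUdef, hstar] at hU1 hU2
  have hspec : S = U * diagonal d * Uᵀ := by
    have := hS.spectral_theorem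
    rw [RCLike.ofReal_real_eq_id] at this
    rw [← hstar]
    simpa using this
  have hmul : ∀ f g : n → ℝ, (U * diagonal f * Uᵀ) * (U * diagonal g * Uᵀ)
      = U * diagonal (fun i => f i * g i) * Uᵀ := by
    intro f g
    have h1 : (U * diagonal f * Uᵀ) * (U * diagonal g * Uᵀ)
        = U * (diagonal f * (Uᵀ * U) * diagonal g) * Uᵀ := by
      simp only [Matrix.mul_assoc]
    rw [h1, hU1, Matrix.mul_one, diagonal_mul_diagonal]
  have htr : ∀ f : n → ℝ, (U * diagonal f * Uᵀ)ᵀ = U * diagonal f * Uᵀ := by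
    intro f
    simp [transpose_mul, diagonal_transpose, Matrix.mul_assoc]
  refine ⟨U * diagonal (fun i => if d i = 0 then 0 else (d i)⁻¹) * Uᵀ,
    U * diagonal (fun i => if d i = 0 then (0:ℝ) else 1) * Uᵀ,
    htr _, htr _, ?_, ?_, ?_, ?_, ?_⟩
  · rw [hmul]
    have : (fun i => (if d i = 0 then (0:ℝ) else 1) * (if d i = 0 then (0:ℝ) else 1))
        = fun i => if d i = 0 then (0:ℝ) else 1 := by
      funext i; by_cases h : d i = 0 <;> simp [h]
    rw [this]
  · conv_lhs => rw [hspec, hmul]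
    conv_rhs => rw [hspec]
    have : (fun i => d i * (if d i = 0 then (0:ℝ) else 1)) = d := by
      funext i; by_cases h : d i = 0 <;> simp [h]
    rw [this]
  · conv_lhs => rw [hspec, hmul]
    have : (fun i => d i * (if d i = 0 then (0:ℝ) else (d i)⁻¹))
        = fun i => if d i = 0 then (0:ℝ) else 1 := by
      funext i; by_cases h : d i = 0 <;> simp [h, mul_inv_cancel₀]
    rw [this]
  · conv_lhs => rw [hspec, hmul]
    have : (fun i => (if d i = 0 then (0:ℝ) else (d i)⁻¹) * d i)
        = fun i => if d i = 0 then (0:ℝ) else 1 := by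
      funext i; by_cases h : d i = 0 <;> simp [h, inv_mul_cancel₀]
    rw [this]
  · rw [hmul]
    have : (fun i => (if d i = 0 then (0:ℝ) else 1) * (if d i = 0 then (0:ℝ) else (d i)⁻¹))
        = fun i => if d i = 0 then (0:ℝ) else (d i)⁻¹ := by
      funext i; by_cases h : d i = 0 <;> simp [h]
    rw [this]

/-- A symmetric block matrix `[[P, Q],[Qᵀ, R]]` is positive semidefinite iff `P ⪰ 0`,
`R ⪰ 0`, and `Q = P^{1/2} Y R^{1/2}` for some `Y` with `YᵀY ⪯ I`. -/
theorem stmt14 {p r : ℕ}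
    (P : Matrix (Fin p) (Fin p) ℝ) (R : Matrix (Fin r) (Fin r) ℝ)
    (Q : Matrix (Fin p) (Fin r) ℝ)
    (hPs : P.IsSymm) (hRs : R.IsSymm) :
    (Matrix.fromBlocks P Q Qᵀ R).PosSemidef ↔
      ∃ (hP : P.PosSemidef) (hR : R.PosSemidef) (Y : Matrix (Fin p) (Fin r) ℝ),
        (1 - Yᵀ * Y).PosSemidef ∧ Q = hP.sqrt * Y * hR.sqrt := by
  constructor
  · intro hM
    have hP : P.PosSemidef := by
      have h := hM.submatrix (Sum.inl : Fin p → Fin p ⊕ Fin r)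
      have he : (fromBlocks P Q Qᵀ R).submatrix Sum.inl Sum.inl = P := rfl
      rwa [he] at h
    have hR : R.PosSemidef := by
      have h := hM.submatrix (Sum.inr : Fin r → Fin p ⊕ Fin r)
      have he : (fromBlocks P Q Qᵀ R).submatrix Sum.inr Sum.inr = R := rfl
      rwa [he] at h
    refine ⟨hP, hR, ?_⟩
    set S := hP.sqrt with hSdef
    set T := hR.sqrt with hTdef
    have hSsd : S.PosSemidef := hP.posSemidef_sqrt
    have hTsd : T.PosSemidef := hR.posSemidef_sqrt
    have hS2 : S * S = P := hP.sqrt_mul_self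
    have hT2 : T * T = R := hR.sqrt_mul_self
    -- key inequality
    have key : ∀ (x : Fin p → ℝ) (y : Fin r → ℝ),
        (x ⬝ᵥ Q *ᵥ y) ^ 2 ≤ (x ⬝ᵥ P *ᵥ x) * (y ⬝ᵥ R *ᵥ y) := by
      intro x y
      have hquad : ∀ t : ℝ, 0 ≤ (x ⬝ᵥ P *ᵥ x) * (t * t) + (2 * (x ⬝ᵥ Q *ᵥ y)) * t
          + (y ⬝ᵥ R *ᵥ y) := by
        intro t
        have h := hM.dotProduct_mulVec_nonneg (Sum.elim (t • x) y)
        rw [star_trivial, fromBlocks_mulVec, sumElim_dotProduct_sumElim] at h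
        simp only [Sum.elim_comp_inl, Sum.elim_comp_inr] at h
        have hqq : y ⬝ᵥ Qᵀ *ᵥ (t • x) = t * (x ⬝ᵥ Q *ᵥ y) := by
          rw [mulVec_smul, dotProduct_smul, smul_eq_mul, dotProduct_mulVec,
            vecMul_transpose, dotProduct_comm]
        rw [dotProduct_add, dotProduct_add, hqq] at h
        have h1 : (t • x) ⬝ᵥ P *ᵥ (t • x) = (x ⬝ᵥ P *ᵥ x) * (t * t) := by
          rw [mulVec_smul, dotProduct_smul, smul_dotProduct, smul_eq_mul, smul_eq_mul]; ring
        have h2 : (t • x) ⬝ᵥ Q *ᵥ y = t * (x ⬝ᵥ Q *ᵥ y) := by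
          rw [smul_dotProduct, smul_eq_mul]
        rw [h1, h2] at h
        nlinarith [h]
      have hd := discrim_le_zero hquad
      rw [discrim] at hd
      nlinarith [hd]
    obtain ⟨Sp, PrS, hSpt, hPrSt, hPrS2, hSPrS, hSSp, hSpS, hPrSSp⟩ := exists_pinv hSsd.1
    obtain ⟨Tp, PrT, hTpt, hPrTt, hPrT2, hTPrT, hTTp, hTpT, hPrTTp⟩ := exists_pinv hTsd.1
    have hQl : PrS * Q = Q := by
      have hz : (1 - PrS) * Q = 0 := by
        apply matrix_eq_zero_of_dot
        intro x y
        rw [dot_mul_mulVec]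
        rw [show (1 - PrS)ᵀ = 1 - PrS by rw [transpose_sub, transpose_one, hPrSt]]
        set x' := (1 - PrS) *ᵥ x with hx'
        have hPx' : P *ᵥ x' = 0 := by
          rw [hx', mulVec_mulVec]
          rw [show P * (1 - PrS) = 0 by
            rw [Matrix.mul_sub, Matrix.mul_one,
              show P * PrS = P by rw [← hS2, Matrix.mul_assoc, hSPrS], sub_self]]
          rw [zero_mulVec]
        have hk := key x' y
        rw [hPx', dotProduct_zero, zero_mul] at hk
        nlinarith [hk]
      calc PrS * Q = Q - (1 - PrS) * Q := by
            rw [Matrix.sub_mul, Matrix.one_mul]; abel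
        _ = Q := by rw [hz, sub_zero]
    have hQr : Q * PrT = Q := by
      have hz : Q * (1 - PrT) = 0 := by
        apply matrix_eq_zero_of_dot
        intro x y
        rw [← mulVec_mulVec]
        set y' := (1 - PrT) *ᵥ y with hy'
        have hRy' : R *ᵥ y' = 0 := by
          rw [hy', mulVec_mulVec]
          rw [show R * (1 - PrT) = 0 by
            rw [Matrix.mul_sub, Matrix.mul_one,
              show R * PrT = R by rw [← hT2, Matrix.mul_assoc, hTPrT], sub_self]]
          rw [zero_mulVec]
        have hk := key x y'
        rw [hRy', dotProduct_zero, mul_zero] at hk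
        nlinarith [hk]
      calc Q * PrT = Q - Q * (1 - PrT) := by rw [Matrix.mul_sub, Matrix.mul_one]; abel
        _ = Q := by rw [hz, sub_zero]
    refine ⟨Sp * Q * Tp, ?_, ?_⟩
    · -- contraction
      set Y := Sp * Q * Tp with hYdef
      clear_value Y
      have hPrY : PrS * Y = Y := by
        rw [hYdef, ← Matrix.mul_assoc, ← Matrix.mul_assoc, hPrSSp]
      refine posSemidef_iff_dotProduct_mulVec.mpr ⟨?_, ?_⟩
      · show (1 - Yᵀ * Y)ᴴ = 1 - Yᵀ * Y
        rw [conjTranspose_sub, conjTranspose_one, conjTranspose_mul,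
          conjTranspose_eq_transpose_of_trivial, conjTranspose_eq_transpose_of_trivial,
          transpose_transpose]
      · intro b
        rw [star_trivial]
        set u := Y *ᵥ b with hu
        clear_value u
        rw [show (1 - Yᵀ * Y) *ᵥ b = b - Yᵀ *ᵥ u by
          rw [hu, sub_mulVec, one_mulVec, ← mulVec_mulVec]]
        rw [dotProduct_sub]
        rw [show b ⬝ᵥ Yᵀ *ᵥ u = u ⬝ᵥ u by
          rw [dotProduct_mulVec, vecMul_transpose, ← hu, dotProduct_comm]]
        have hSpPSp : Sp * P * Sp = PrS := by
          rw [← hS2, ← Matrix.mul_assoc, Matrix.mul_assoc (Sp * S) S Sp, hSpS, hSSp, hPrS2]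
        have hTpRTp : Tp * R * Tp = PrT := by
          rw [← hT2, ← Matrix.mul_assoc, Matrix.mul_assoc (Tp * T) T Tp, hTpT, hTTp, hPrT2]
        have h1 : u ⬝ᵥ u = (Sp *ᵥ u) ⬝ᵥ Q *ᵥ (Tp *ᵥ b) := by
          calc u ⬝ᵥ u = u ⬝ᵥ (Sp * (Q * Tp)) *ᵥ b := by
                nth_rewrite 2 [hu]
                rw [hYdef, Matrix.mul_assoc]
            _ = (Spᵀ *ᵥ u) ⬝ᵥ ((Q * Tp) *ᵥ b) := by rw [dot_mul_mulVec]
            _ = (Sp *ᵥ u) ⬝ᵥ Q *ᵥ (Tp *ᵥ b) := by rw [hSpt, ← mulVec_mulVec]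
        have hk := key (Sp *ᵥ u) (Tp *ᵥ b)
        rw [← h1] at hk
        have h2 : (Sp *ᵥ u) ⬝ᵥ P *ᵥ (Sp *ᵥ u) = u ⬝ᵥ u := by
          rw [mulVec_mulVec]
          have hd := dot_mul_mulVec Spᵀ (P * Sp) u u
          rw [transpose_transpose, hSpt] at hd
          rw [← hd, ← Matrix.mul_assoc, hSpPSp]
          rw [show PrS *ᵥ u = u by rw [hu, mulVec_mulVec, hPrY]]
        have h3 : (Tp *ᵥ b) ⬝ᵥ R *ᵥ (Tp *ᵥ b) = b ⬝ᵥ PrT *ᵥ b := by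
          rw [mulVec_mulVec]
          have hd := dot_mul_mulVec Tpᵀ (R * Tp) b b
          rw [transpose_transpose, hTpt] at hd
          rw [← hd, ← Matrix.mul_assoc, hTpRTp]
        rw [h2, h3] at hk
        have hPrTidem : (1 - PrT) * (1 - PrT) = 1 - PrT := by
          simp only [Matrix.sub_mul, Matrix.mul_sub, Matrix.one_mul, Matrix.mul_one, hPrT2]
          abel
        have hle : b ⬝ᵥ PrT *ᵥ b ≤ b ⬝ᵥ b := by
          have hd := dot_mul_mulVec (1 - PrT) (1 - PrT) b b
          rw [hPrTidem, show (1 - PrT)ᵀ = 1 - PrT by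
            rw [transpose_sub, transpose_one, hPrTt]] at hd
          rw [sub_mulVec, one_mulVec, dotProduct_sub] at hd
          nlinarith [dotProduct_self_nonneg' (b - PrT *ᵥ b), hd]
        nlinarith [hk, hle, dotProduct_self_nonneg' u, dotProduct_self_nonneg' b]
    · -- Q = S Y T
      have : S * (Sp * Q * Tp) * T = Q := by
        rw [show S * (Sp * Q * Tp) * T = (S * Sp) * (Q * (Tp * T)) from by
          simp only [Matrix.mul_assoc], hSSp, hTpT, hQr, hQl]
      exact this.symm
  · rintro ⟨hP, hR, Y, hY, hQeq⟩
    set S := hP.sqrt with hSdef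
    set T := hR.sqrt with hTdef
    have hSsd : S.PosSemidef := hP.posSemidef_sqrt
    have hTsd : T.PosSemidef := hR.posSemidef_sqrt
    have hS2 : S * S = P := hP.sqrt_mul_self
    have hT2 : T * T = R := hR.sqrt_mul_self
    have hSt : Sᵀ = S := by
      rw [← conjTranspose_eq_transpose_of_trivial]; exact hSsd.1
    have hTt : Tᵀ = T := by
      rw [← conjTranspose_eq_transpose_of_trivial]; exact hTsd.1
    subst hQeq
    have hN : (fromBlocks (1 : Matrix (Fin p) (Fin p) ℝ) Y Yᵀ 1).PosSemidef := by
      refine posSemidef_iff_dotProduct_mulVec.mpr ⟨?_, ?_⟩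
      · show _ᴴ = _
        rw [fromBlocks_conjTranspose]
        simp [conjTranspose_eq_transpose_of_trivial]
      · intro v
        rw [star_trivial]
        have hv : v = Sum.elim (v ∘ Sum.inl) (v ∘ Sum.inr) := (Sum.elim_comp_inl_inr v).symm
        set x := v ∘ Sum.inl with hx
        set y := v ∘ Sum.inr with hyy
        rw [hv, fromBlocks_mulVec, sumElim_dotProduct_sumElim]
        simp only [one_mulVec, dotProduct_add, Sum.elim_comp_inl, Sum.elim_comp_inr]
        have h1 : y ⬝ᵥ Yᵀ *ᵥ x = x ⬝ᵥ Y *ᵥ y := by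
          rw [dotProduct_mulVec, vecMul_transpose, dotProduct_comm]
        rw [h1]
        have hy2 := hY.dotProduct_mulVec_nonneg y
        rw [star_trivial, sub_mulVec, one_mulVec, dotProduct_sub, ← mulVec_mulVec,
          show y ⬝ᵥ Yᵀ *ᵥ (Y *ᵥ y) = (Y *ᵥ y) ⬝ᵥ (Y *ᵥ y) by
            rw [dotProduct_mulVec, vecMul_transpose, dotProduct_comm]] at hy2
        have hsq := dotProduct_self_nonneg' (x + Y *ᵥ y)
        rw [add_dotProduct, dotProduct_add, dotProduct_add,
          show (Y *ᵥ y) ⬝ᵥ x = x ⬝ᵥ (Y *ᵥ y) from dotProduct_comm _ _] at hsq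
        linarith [hsq, hy2]
    have hB := hN.mul_mul_conjTranspose_same (fromBlocks S 0 0 T)
    have hcalc : fromBlocks S 0 0 T * fromBlocks 1 Y Yᵀ 1 * (fromBlocks S 0 0 T)ᴴ
        = fromBlocks P (S * Y * T) (S * Y * T)ᵀ R := by
      rw [fromBlocks_conjTranspose]
      simp only [conjTranspose_eq_transpose_of_trivial, hSt, hTt, transpose_zero]
      rw [fromBlocks_multiply, fromBlocks_multiply]
      simp [Matrix.mul_assoc, hS2, hT2, transpose_mul, hSt, hTt]
    rw [hcalc] at hB
    exact hB
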